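/- Let y ∈ ℝ^n, μ > 0, λ ∈ ℝ, and let Δ be a probability distribution on {0,1}^n with (b_1,…,b_n) ∼ Δ. Suppose that for all t ≥ √n, P[|Σ b_i y_i − λ| ≤ t] ≤ μt. Then there exist absolute constants c, C > 0 and a vector y' ∈ ℤ^n such that: (R1) ‖y − y'‖_∞ ≤ 1; (R2) P[|Σ b_i y'_i − λ| ≤ t] ≤ Cμt for all t ≥ √n; (R3) sup_z P[|Σ b_i y'_i − z| ≤ √n] ≥ c · sup_z P[|Σ b_i y_i − z| ≤ √n]; (R4) |Σᵢ y_i − Σᵢ y'_i| ≤ C√n. -/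

import Mathlib

open MeasureTheory Finset
open scoped ENNReal NNReal

namespace RRound

variable {n : ℕ}

/-- weight of a Boolean choice at coordinate i -/
noncomputable def wt (y : Fin n → ℝ) (i : Fin n) (v : Bool) : ℝ :=
  if v then Int.fract (y i) else 1 - Int.fract (y i)

/-- rounding error at coordinate i given choice v -/
noncomputable def ee (y : Fin n → ℝ) (i : Fin n) (v : Bool) : ℝ :=
  Int.fract (y i) - (if v then 1 else 0)

noncomputable def wgt (y : Fin n → ℝ) (η : Fin n → Bool) : ℝ := ∏ i, wt y i (η i)

lemma wt_nonneg (y : Fin n → ℝ) (i : Fin n) (v : Bool) : 0 ≤ wt y i v := by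
  rcases v
  · simp only [wt, if_neg Bool.false_ne_true]
    linarith [Int.fract_lt_one (y i)]
  · simp only [wt, if_pos rfl]; exact Int.fract_nonneg (y i)

lemma wt_sum (y : Fin n → ℝ) (i : Fin n) : ∑ v : Bool, wt y i v = 1 := by
  simp [wt]

lemma wgt_nonneg (y : Fin n → ℝ) (η : Fin n → Bool) : 0 ≤ wgt y η :=
  Finset.prod_nonneg fun i _ => wt_nonneg y i (η i)

lemma indep_prod (y : Fin n → ℝ) (g : Fin n → Bool → ℝ) :
    ∑ η : Fin n → Bool, ∏ i, (wt y i (η i) * g i (η i)) = ∏ i, ∑ v : Bool, wt y i v * g i v := by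
  rw [Finset.prod_univ_sum (fun _ => (univ : Finset Bool)) (fun i v => wt y i v * g i v)]
  rw [Fintype.piFinset_univ]

lemma wgt_sum (y : Fin n → ℝ) : ∑ η : Fin n → Bool, wgt y η = 1 := by
  have h := indep_prod y (fun _ _ => 1)
  simp only [mul_one, wt_sum, Finset.prod_const_one] at h
  simpa [wgt] using h

lemma ee_abs_le (y : Fin n → ℝ) (i : Fin n) (v : Bool) : |ee y i v| ≤ 1 := by
  have h0 := Int.fract_nonneg (y i)
  have h1 := (Int.fract_lt_one (y i)).le
  rcases v <;> simp [ee] <;> rw [abs_le] <;> constructor <;> linarith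

noncomputable def mom (y : Fin n → ℝ) (i : Fin n) (k : ℕ) : ℝ :=
  ∑ v : Bool, wt y i v * (ee y i v) ^ k

lemma mom_one (y : Fin n → ℝ) (i : Fin n) : mom y i 1 = 0 := by
  simp [mom, wt, ee]; ring

lemma mom_abs_le_one (y : Fin n → ℝ) (i : Fin n) (k : ℕ) : |mom y i k| ≤ 1 := by
  have h0 := Int.fract_nonneg (y i)
  have h1 := (Int.fract_lt_one (y i)).le
  simp only [mom, Fintype.sum_bool]
  set t := Int.fract (y i) with ht
  have e1 : wt y i true = t := by simp [wt, ht]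
  have e2 : wt y i false = 1 - t := by simp [wt, ht]
  have e3 : ee y i true = t - 1 := by simp [ee, ht]
  have e4 : ee y i false = t := by simp [ee, ht]
  rw [e1, e2, e3, e4]
  have hb1 : |t * (t-1)^k| ≤ t := by
    rw [abs_mul, abs_of_nonneg h0, abs_pow]
    have : |t - 1| ≤ 1 := by rw [abs_le]; constructor <;> linarith
    calc t * |t-1|^k ≤ t * 1 := by
          have := pow_le_one₀ (abs_nonneg _) this (n := k)
          nlinarith [abs_nonneg (t-1)]
    _ = t := mul_one t
  have hb2 : |(1 - t) * t^k| ≤ 1 - t := by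
    rw [abs_mul, abs_of_nonneg (by linarith : (0:ℝ) ≤ 1 - t), abs_pow, abs_of_nonneg h0]
    have := pow_le_one₀ h0 h1 (n := k)
    nlinarith
  calc |t * (t-1)^k + (1-t) * t^k| ≤ |t * (t-1)^k| + |(1-t) * t^k| := abs_add_le _ _
  _ ≤ t + (1 - t) := add_le_add hb1 hb2
  _ = 1 := by ring

lemma mom_abs_le_quarter (y : Fin n → ℝ) (i : Fin n) {k : ℕ} (hk : 2 ≤ k) :
    |mom y i k| ≤ 1/4 := by
  have h0 := Int.fract_nonneg (y i)
  have h1 := (Int.fract_lt_one (y i)).le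
  simp only [mom, Fintype.sum_bool]
  set t := Int.fract (y i) with ht
  have e1 : wt y i true = t := by simp [wt, ht]
  have e2 : wt y i false = 1 - t := by simp [wt, ht]
  have e3 : ee y i true = t - 1 := by simp [ee, ht]
  have e4 : ee y i false = t := by simp [ee, ht]
  rw [e1, e2, e3, e4]
  have ha : |t * (t-1)^k| ≤ t * (1-t)^2 := by
    rw [abs_mul, abs_of_nonneg h0, abs_pow]
    have h5 : |t - 1| = 1 - t := by rw [abs_of_nonpos (by linarith)]; ring
    rw [h5]
    have : (1-t)^k ≤ (1-t)^2 := pow_le_pow_of_le_one (by linarith) (by linarith) hk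
    nlinarith
  have hb : |(1-t) * t^k| ≤ (1-t) * t^2 := by
    rw [abs_mul, abs_of_nonneg (by linarith : (0:ℝ) ≤ 1 - t), abs_pow, abs_of_nonneg h0]
    have : t^k ≤ t^2 := pow_le_pow_of_le_one h0 h1 hk
    nlinarith
  calc |t * (t-1)^k + (1-t) * t^k| ≤ |t * (t-1)^k| + |(1-t) * t^k| := abs_add_le _ _
  _ ≤ t * (1-t)^2 + (1-t) * t^2 := add_le_add ha hb
  _ = t * (1-t) := by ring
  _ ≤ 1/4 := by nlinarith [sq_nonneg (t - 1/2)]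



def cnt (i j k l m : Fin n) : ℕ :=
  (if i = m then 1 else 0) + (if j = m then 1 else 0) +
  (if k = m then 1 else 0) + (if l = m then 1 else 0)

lemma prod_pow_single (x : Fin n → ℝ) (a : Fin n) :
    (∏ m, x m ^ (if a = m then 1 else 0)) = x a := by
  have : ∀ m : Fin n, x m ^ (if a = m then 1 else 0) = (if a = m then x m else 1) := by
    intro m; split <;> simp
  rw [Finset.prod_congr rfl (fun m _ => this m), Finset.prod_ite_eq]
  simp

lemma prod_pow_cnt (x : Fin n → ℝ) (i j k l : Fin n) :
    (∏ m, x m ^ cnt i j k l m) = x i * x j * (x k * x l) := by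
  simp only [cnt, pow_add, Finset.prod_mul_distrib, prod_pow_single]
  ring

lemma cnt_first_ge (i j k l : Fin n)
    (h : (i = j) ∨ (i = k) ∨ (i = l)) : 2 ≤ cnt i j k l i := by
  rcases h with h | h | h <;> simp [cnt, ← h]
  all_goals omega

lemma cnt_cases (i j k l : Fin n) :
    (i = j ∧ k = l) ∨ (i = k ∧ j = l) ∨ (i = l ∧ j = k) ∨ (∃ m, cnt i j k l m = 1) := by
  by_cases hij : i = j
  · by_cases hkl : k = l
    · exact Or.inl ⟨hij, hkl⟩
    · by_cases hik : i = k
      · refine Or.inr (Or.inr (Or.inr ⟨l, ?_⟩))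
        have h1 : i ≠ l := fun h => hkl (hik.symm.trans h)
        have h2 : j ≠ l := fun h => h1 (hij.trans h)
        have h3 : k ≠ l := hkl
        simp [cnt, h1, h2, h3]
      · refine Or.inr (Or.inr (Or.inr ⟨k, ?_⟩))
        have h2 : j ≠ k := fun h => hik (hij.trans h)
        have h3 : k ≠ l := hkl  -- unused maybe
        simp [cnt, hik, h2, Ne.symm hkl]
  · by_cases hik : i = k
    · by_cases hjl : j = l
      · exact Or.inr (Or.inl ⟨hik, hjl⟩)
      · refine Or.inr (Or.inr (Or.inr ⟨j, ?_⟩))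
        have h1 : i ≠ j := hij
        have h3 : k ≠ j := fun h => hij (hik.trans h)
        have h4 : l ≠ j := fun h => hjl h.symm
        simp [cnt, Ne.symm h1, h3, h4, hij]
    · by_cases hil : i = l
      · by_cases hjk : j = k
        · exact Or.inr (Or.inr (Or.inl ⟨hil, hjk⟩))
        · refine Or.inr (Or.inr (Or.inr ⟨j, ?_⟩))
          have h3 : k ≠ j := fun h => hjk h.symm
          have h4 : l ≠ j := fun h => hij (hil.trans h)
          simp [cnt, Ne.symm hij, h3, h4, hij]
      · refine Or.inr (Or.inr (Or.inr ⟨i, ?_⟩))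
        simp [cnt, Ne.symm hij, Ne.symm hik, Ne.symm hil, fun h => hij h]


/-- counting lemmas -/

lemma count_diag : ∑ p : Fin n × Fin n, (if p.1 = p.2 then (1:ℝ) else 0) = n := by
  rw [Fintype.sum_prod_type]
  have h : ∀ i : Fin n, ∑ j : Fin n, (if i = j then (1:ℝ) else 0) = 1 := by
    intro i; rw [Finset.sum_ite_eq]; simp
  rw [Finset.sum_congr rfl (fun i _ => h i)]
  simp

lemma count_pt (g : Fin n × Fin n → Fin n × Fin n) :
    ∑ p : Fin n × Fin n, ∑ r : Fin n × Fin n, (if r = g p then (1:ℝ) else 0) = (n:ℝ)^2 := by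
  have h : ∀ p : Fin n × Fin n, ∑ r : Fin n × Fin n, (if r = g p then (1:ℝ) else 0) = 1 := by
    intro p; rw [Finset.sum_ite_eq']; simp
  rw [Finset.sum_congr rfl (fun p _ => h p)]
  simp [sq]

lemma cm1 : ∑ q : (Fin n × Fin n) × (Fin n × Fin n),
    (if q.1.1 = q.1.2 ∧ q.2.1 = q.2.2 then (1:ℝ) else 0) = (n:ℝ)^2 := by
  have h : ∀ q : (Fin n × Fin n) × (Fin n × Fin n),
      (if q.1.1 = q.1.2 ∧ q.2.1 = q.2.2 then (1:ℝ) else 0)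
      = (if q.1.1 = q.1.2 then (1:ℝ) else 0) * (if q.2.1 = q.2.2 then (1:ℝ) else 0) := by
    intro q; split_ifs with h1 h2 h3 <;> simp_all
  rw [Finset.sum_congr rfl (fun q _ => h q), Fintype.sum_prod_type]
  have : ∀ p : Fin n × Fin n, ∑ r : Fin n × Fin n,
      (if p.1 = p.2 then (1:ℝ) else 0) * (if r.1 = r.2 then (1:ℝ) else 0)
      = (if p.1 = p.2 then (1:ℝ) else 0) * (n:ℝ) := by
    intro p; rw [← Finset.mul_sum, count_diag]
  rw [Finset.sum_congr rfl (fun p _ => this p), ← Finset.sum_mul, count_diag]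
  ring

lemma cm2 : ∑ q : (Fin n × Fin n) × (Fin n × Fin n),
    (if q.1.1 = q.2.1 ∧ q.1.2 = q.2.2 then (1:ℝ) else 0) = (n:ℝ)^2 := by
  have h : ∀ q : (Fin n × Fin n) × (Fin n × Fin n),
      (if q.1.1 = q.2.1 ∧ q.1.2 = q.2.2 then (1:ℝ) else 0)
      = (if q.2 = q.1 then (1:ℝ) else 0) := by
    intro q
    refine if_congr ?_ rfl rfl
    rw [Prod.ext_iff]
    constructor
    · rintro ⟨h1, h2⟩; exact ⟨h1.symm, h2.symm⟩
    · rintro ⟨h1, h2⟩; exact ⟨h1.symm, h2.symm⟩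
  rw [Finset.sum_congr rfl (fun q _ => h q), Fintype.sum_prod_type]
  exact count_pt id

lemma cm3 : ∑ q : (Fin n × Fin n) × (Fin n × Fin n),
    (if q.1.1 = q.2.2 ∧ q.1.2 = q.2.1 then (1:ℝ) else 0) = (n:ℝ)^2 := by
  have h : ∀ q : (Fin n × Fin n) × (Fin n × Fin n),
      (if q.1.1 = q.2.2 ∧ q.1.2 = q.2.1 then (1:ℝ) else 0)
      = (if q.2 = (q.1.2, q.1.1) then (1:ℝ) else 0) := by
    intro q
    refine if_congr ?_ rfl rfl
    rw [Prod.ext_iff]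
    constructor
    · rintro ⟨h1, h2⟩; exact ⟨h2.symm, h1.symm⟩
    · rintro ⟨h1, h2⟩; exact ⟨h2.symm, h1.symm⟩
  rw [Finset.sum_congr rfl (fun q _ => h q), Fintype.sum_prod_type]
  exact count_pt (fun p => (p.2, p.1))

lemma pow_four_sum (a : Fin n → ℝ) :
    (∑ i, a i) ^ 4 = ∑ q : (Fin n × Fin n) × (Fin n × Fin n),
      a q.1.1 * a q.1.2 * (a q.2.1 * a q.2.2) := by
  have h2 : (∑ i, a i) ^ 2 = ∑ p : Fin n × Fin n, a p.1 * a p.2 := by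
    rw [sq, Finset.sum_mul_sum]
    exact (Fintype.sum_prod_type fun p => a p.1 * a p.2).symm
  calc (∑ i, a i)^4 = ((∑ i, a i)^2)^2 := by ring
  _ = (∑ p : Fin n × Fin n, a p.1 * a p.2)^2 := by rw [h2]
  _ = ∑ q : (Fin n × Fin n) × (Fin n × Fin n), a q.1.1 * a q.1.2 * (a q.2.1 * a q.2.2) := by
      rw [sq, Finset.sum_mul_sum]
      exact (Fintype.sum_prod_type fun q : (Fin n × Fin n) × (Fin n × Fin n) =>
        a q.1.1 * a q.1.2 * (a q.2.1 * a q.2.2)).symm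

noncomputable def Hsum (y : Fin n → ℝ) (i j k l : Fin n) : ℝ :=
  ∑ η : Fin n → Bool, wgt y η * ∏ m, ee y m (η m) ^ cnt i j k l m

lemma Hsum_eq (y : Fin n → ℝ) (i j k l : Fin n) :
    Hsum y i j k l = ∏ m, mom y m (cnt i j k l m) := by
  unfold Hsum
  have h1 : ∀ η : Fin n → Bool,
      wgt y η * ∏ m, ee y m (η m) ^ cnt i j k l m
      = ∏ m, (wt y m (η m) * ee y m (η m) ^ cnt i j k l m) := by
    intro η; rw [wgt, ← Finset.prod_mul_distrib]
  rw [Finset.sum_congr rfl (fun η _ => h1 η)]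
  rw [indep_prod y (fun m v => ee y m v ^ cnt i j k l m)]
  rfl

lemma Hsum_zero (y : Fin n → ℝ) (i j k l : Fin n) {m₀ : Fin n}
    (h : cnt i j k l m₀ = 1) : Hsum y i j k l = 0 := by
  rw [Hsum_eq]
  refine Finset.prod_eq_zero (Finset.mem_univ m₀) ?_
  rw [h, mom_one]

lemma Hsum_quarter (y : Fin n → ℝ) (i j k l : Fin n)
    (h : 2 ≤ cnt i j k l i) : |Hsum y i j k l| ≤ 1/4 := by
  rw [Hsum_eq, Finset.abs_prod]
  rw [← Finset.mul_prod_erase Finset.univ _ (Finset.mem_univ i)]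
  have h1 : |mom y i (cnt i j k l i)| ≤ 1/4 := mom_abs_le_quarter y i h
  have h2 : ∏ m ∈ Finset.univ.erase i, |mom y m (cnt i j k l m)| ≤ 1 :=
    Finset.prod_le_one (fun m _ => abs_nonneg _) (fun m _ => mom_abs_le_one y m _)
  have h3 : (0:ℝ) ≤ ∏ m ∈ Finset.univ.erase i, |mom y m (cnt i j k l m)| :=
    Finset.prod_nonneg (fun m _ => abs_nonneg _)
  nlinarith [abs_nonneg (mom y i (cnt i j k l i))]

lemma momBound (y : Fin n → ℝ) (c : Fin n → ℝ) (hc : ∀ i, |c i| ≤ 1) :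
    ∑ η : Fin n → Bool, wgt y η * (∑ i, c i * ee y i (η i)) ^ 4 ≤ (n:ℝ)^2 := by
  classical
  -- expand the 4th power
  have hexp : ∀ η : Fin n → Bool,
      wgt y η * (∑ i, c i * ee y i (η i)) ^ 4
      = ∑ q : (Fin n × Fin n) × (Fin n × Fin n),
          (c q.1.1 * c q.1.2 * (c q.2.1 * c q.2.2)) *
          (wgt y η * ∏ m, ee y m (η m) ^ cnt q.1.1 q.1.2 q.2.1 q.2.2 m) := by
    intro η
    rw [pow_four_sum (fun i => c i * ee y i (η i)), Finset.mul_sum]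
    refine Finset.sum_congr rfl (fun q _ => ?_)
    rw [prod_pow_cnt (fun m => ee y m (η m)) q.1.1 q.1.2 q.2.1 q.2.2]
    ring
  rw [Finset.sum_congr rfl (fun η _ => hexp η), Finset.sum_comm]
  have hterm : ∀ q : (Fin n × Fin n) × (Fin n × Fin n),
      (∑ η : Fin n → Bool, (c q.1.1 * c q.1.2 * (c q.2.1 * c q.2.2)) *
          (wgt y η * ∏ m, ee y m (η m) ^ cnt q.1.1 q.1.2 q.2.1 q.2.2 m))
      = (c q.1.1 * c q.1.2 * (c q.2.1 * c q.2.2)) * Hsum y q.1.1 q.1.2 q.2.1 q.2.2 := by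
    intro q; rw [← Finset.mul_sum]; rfl
  rw [Finset.sum_congr rfl (fun q _ => hterm q)]
  -- per-term bound
  have hq : ∀ q : (Fin n × Fin n) × (Fin n × Fin n),
      (c q.1.1 * c q.1.2 * (c q.2.1 * c q.2.2)) * Hsum y q.1.1 q.1.2 q.2.1 q.2.2
      ≤ (1/4) * (((if q.1.1 = q.1.2 ∧ q.2.1 = q.2.2 then (1:ℝ) else 0))
          + (if q.1.1 = q.2.1 ∧ q.1.2 = q.2.2 then (1:ℝ) else 0)
          + (if q.1.1 = q.2.2 ∧ q.1.2 = q.2.1 then (1:ℝ) else 0)) := by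
    rintro ⟨⟨i, j⟩, k, l⟩
    simp only
    have hcc : |c i * c j * (c k * c l)| ≤ 1 := by
      rw [abs_mul, abs_mul, abs_mul]
      have h12 : |c i| * |c j| ≤ 1 :=
        mul_le_one₀ (hc i) (abs_nonneg _) (hc j)
      have h34 : |c k| * |c l| ≤ 1 :=
        mul_le_one₀ (hc k) (abs_nonneg _) (hc l)
      exact mul_le_one₀ h12 (mul_nonneg (abs_nonneg _) (abs_nonneg _)) h34
    rcases cnt_cases i j k l with h | h | h | ⟨m₀, hm₀⟩
    · have hH := Hsum_quarter y i j k l (cnt_first_ge i j k l (Or.inl h.1))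
      rw [if_pos h]
      have : |c i * c j * (c k * c l) * Hsum y i j k l| ≤ 1/4 := by
        rw [abs_mul]
        nlinarith [abs_nonneg (c i * c j * (c k * c l)), abs_nonneg (Hsum y i j k l)]
      have h2 := (abs_le.mp this).2
      have i2 : (0:ℝ) ≤ (if i = k ∧ j = l then (1:ℝ) else 0) := by positivity
      have i3 : (0:ℝ) ≤ (if i = l ∧ j = k then (1:ℝ) else 0) := by positivity
      linarith
    · have hH := Hsum_quarter y i j k l (cnt_first_ge i j k l (Or.inr (Or.inl h.1)))
      rw [if_pos h]
      have : |c i * c j * (c k * c l) * Hsum y i j k l| ≤ 1/4 := by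
        rw [abs_mul]
        nlinarith [abs_nonneg (c i * c j * (c k * c l)), abs_nonneg (Hsum y i j k l)]
      have h2 := (abs_le.mp this).2
      have i1 : (0:ℝ) ≤ (if i = j ∧ k = l then (1:ℝ) else 0) := by positivity
      have i3 : (0:ℝ) ≤ (if i = l ∧ j = k then (1:ℝ) else 0) := by positivity
      linarith
    · have hH := Hsum_quarter y i j k l (cnt_first_ge i j k l (Or.inr (Or.inr h.1)))
      rw [if_pos h]
      have : |c i * c j * (c k * c l) * Hsum y i j k l| ≤ 1/4 := by
        rw [abs_mul]
        nlinarith [abs_nonneg (c i * c j * (c k * c l)), abs_nonneg (Hsum y i j k l)]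
      have h2 := (abs_le.mp this).2
      have i1 : (0:ℝ) ≤ (if i = j ∧ k = l then (1:ℝ) else 0) := by positivity
      have i2 : (0:ℝ) ≤ (if i = k ∧ j = l then (1:ℝ) else 0) := by positivity
      linarith
    · rw [Hsum_zero y i j k l hm₀, mul_zero]
      positivity
  calc ∑ q : (Fin n × Fin n) × (Fin n × Fin n),
        (c q.1.1 * c q.1.2 * (c q.2.1 * c q.2.2)) * Hsum y q.1.1 q.1.2 q.2.1 q.2.2
      ≤ ∑ q : (Fin n × Fin n) × (Fin n × Fin n),
        (1/4) * (((if q.1.1 = q.1.2 ∧ q.2.1 = q.2.2 then (1:ℝ) else 0))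
          + (if q.1.1 = q.2.1 ∧ q.1.2 = q.2.2 then (1:ℝ) else 0)
          + (if q.1.1 = q.2.2 ∧ q.1.2 = q.2.1 then (1:ℝ) else 0)) :=
        Finset.sum_le_sum (fun q _ => hq q)
  _ ≤ (n:ℝ)^2 := by
      rw [← Finset.mul_sum]
      rw [Finset.sum_add_distrib, Finset.sum_add_distrib, cm1, cm2, cm3]
      nlinarith [sq_nonneg ((n:ℝ))]

lemma exists_dyadic {x : ℝ} (hx : 1 ≤ x) : ∃ j : ℕ, (2:ℝ)^j ≤ x ∧ x < 2^(j+1) := by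
  classical
  have hP : ∃ m : ℕ, x < (2:ℝ)^m := pow_unbounded_of_one_lt x (by norm_num)
  have hm₀ : x < 2 ^ Nat.find hP := Nat.find_spec hP
  have hne : Nat.find hP ≠ 0 := by
    intro h; rw [h] at hm₀; simp at hm₀; linarith
  obtain ⟨j, hj⟩ := Nat.exists_eq_succ_of_ne_zero hne
  refine ⟨j, ?_, by rw [← Nat.succ_eq_add_one, ← hj]; exact hm₀⟩
  have := Nat.find_min hP (m := j) (by omega)
  push_neg at this
  exact this

lemma shell_bound {Ω : Type} [mΩ : MeasurableSpace Ω] (μ : Measure Ω) [IsProbabilityMeasure μ]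
    (S : Ω → ℝ) (hS : Measurable S) (lam μ₀ : ℝ) (hμ₀ : 0 < μ₀) {n : ℕ} (hn : 1 ≤ n)
    (hyp : ∀ t : ℝ, Real.sqrt n ≤ t → (μ {ω | |S ω - lam| ≤ t}).toReal ≤ μ₀ * t) :
    ∫⁻ ω, ENNReal.ofReal ((n:ℝ)^2 / (max (Real.sqrt n) (|S ω - lam|/2))^3) ∂μ
      ≤ ENNReal.ofReal (8 * μ₀ * n) := by
  set r := Real.sqrt n with hrdef
  have hn1 : (1:ℝ) ≤ (n:ℝ) := by exact_mod_cast hn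
  have hr : 0 < r := Real.sqrt_pos.mpr (by linarith)
  have hr2 : r^2 = n := Real.sq_sqrt (by linarith)
  set s : Ω → ℝ := fun ω => max r (|S ω - lam|/2) with hsdef
  have hsmeas : Measurable s :=
    Measurable.max measurable_const ((hS.sub measurable_const).abs.div_const 2)
  have hs_lb : ∀ ω, r ≤ s ω := fun ω => le_max_left _ _
  have hs_pos : ∀ ω, 0 < s ω := fun ω => lt_of_lt_of_le hr (hs_lb ω)
  set E : ℕ → Set Ω := fun j => {ω | (2:ℝ)^j * r ≤ s ω ∧ s ω < 2^(j+1) * r} with hEdef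
  have hEmeas : ∀ j, MeasurableSet (E j) := by
    intro j
    exact (measurableSet_le measurable_const hsmeas).inter
      (measurableSet_lt hsmeas measurable_const)
  set B : ℕ → ℝ≥0∞ := fun j => ENNReal.ofReal ((n:ℝ)^2 / ((2:ℝ)^j * r)^3) with hBdef
  -- pointwise domination
  have hpt : ∀ ω, ENNReal.ofReal ((n:ℝ)^2 / (s ω)^3)
      ≤ ∑' j : ℕ, (E j).indicator (fun _ => B j) ω := by
    intro ω
    obtain ⟨j, hj1, hj2⟩ := exists_dyadic (x := s ω / r) ((one_le_div hr).mpr (hs_lb ω))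
    have hj1' : (2:ℝ)^j * r ≤ s ω := (le_div_iff₀ hr).mp hj1
    have hj2' : s ω < 2^(j+1) * r := (div_lt_iff₀ hr).mp hj2
    have hmem : ω ∈ E j := ⟨hj1', hj2'⟩
    refine le_trans ?_ (ENNReal.le_tsum j)
    rw [Set.indicator_of_mem hmem]
    refine ENNReal.ofReal_le_ofReal ?_
    refine div_le_div_of_nonneg_left (by positivity) (by positivity) ?_
    exact pow_le_pow_left₀ (by positivity) hj1' 3
  calc ∫⁻ ω, ENNReal.ofReal ((n:ℝ)^2 / (s ω)^3) ∂μ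
      ≤ ∫⁻ ω, ∑' j : ℕ, (E j).indicator (fun _ => B j) ω ∂μ := lintegral_mono hpt
  _ = ∑' j : ℕ, ∫⁻ ω, (E j).indicator (fun _ => B j) ω ∂μ :=
      lintegral_tsum (fun j => ((measurable_const.indicator (hEmeas j))).aemeasurable)
  _ = ∑' j : ℕ, B j * μ (E j) := by
      refine tsum_congr (fun j => ?_)
      exact lintegral_indicator_const (hEmeas j) (B j)
  _ ≤ ∑' j : ℕ, ENNReal.ofReal (4*μ₀*(n:ℝ)) * (ENNReal.ofReal (1/4))^j := by
      refine ENNReal.tsum_le_tsum (fun j => ?_)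
      have hsub : E j ⊆ {ω | |S ω - lam| ≤ 2^(j+2) * r} := by
        intro ω hω
        have h1 : |S ω - lam| / 2 ≤ s ω := le_max_right _ _
        have h2 : s ω < 2^(j+1) * r := hω.2
        have : |S ω - lam| ≤ 2 * (2^(j+1) * r) := by linarith
        calc |S ω - lam| ≤ 2 * (2^(j+1) * r) := this
        _ = 2^(j+2) * r := by ring
      have ht : r ≤ 2^(j+2) * r := by
        nlinarith [one_le_pow₀ (by norm_num : (1:ℝ) ≤ 2) (n := j+2), hr]
      have hμE : μ (E j) ≤ ENNReal.ofReal (μ₀ * (2^(j+2) * r)) := by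
        refine le_trans (measure_mono hsub) ?_
        rw [ENNReal.le_ofReal_iff_toReal_le (measure_ne_top μ _) (by positivity)]
        exact hyp _ ht
      calc B j * μ (E j) ≤ B j * ENNReal.ofReal (μ₀ * (2^(j+2) * r)) := by gcongr
      _ = ENNReal.ofReal ((n:ℝ)^2 / ((2:ℝ)^j * r)^3 * (μ₀ * (2^(j+2) * r))) :=
          (ENNReal.ofReal_mul (by positivity)).symm
      _ = ENNReal.ofReal ((4*μ₀*(n:ℝ)) * (1/4)^j) := by
          congr 1
          have ha : (0:ℝ) < (2:ℝ)^j := by positivity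
          have h4 : ((4:ℝ))^j = ((2:ℝ)^j)^2 := by
            rw [show (4:ℝ) = 2^2 by norm_num, ← pow_mul, mul_comm, pow_mul]
          have h14 : ((1:ℝ)/4)^j = 1/(((2:ℝ)^j)^2) := by
            rw [div_pow, one_pow, h4]
          have hrn : r^3 = (n:ℝ) * r := by
            rw [pow_succ, hr2]
          rw [h14, mul_one_div, div_mul_eq_mul_div,
            div_eq_div_iff (by positivity) (by positivity)]
          linear_combination (-4 * μ₀ * (n:ℝ) * ((2:ℝ)^j)^3) * hrn
      _ = ENNReal.ofReal (4*μ₀*(n:ℝ)) * (ENNReal.ofReal (1/4))^j := by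
          rw [ENNReal.ofReal_mul (by positivity), ENNReal.ofReal_pow (by norm_num)]
  _ = ENNReal.ofReal (4*μ₀*(n:ℝ)) * ∑' j : ℕ, (ENNReal.ofReal (1/4))^j :=
      ENNReal.tsum_mul_left
  _ ≤ ENNReal.ofReal (4*μ₀*(n:ℝ)) * 2 := by
      gcongr
      rw [ENNReal.tsum_geometric]
      -- (1 - ofReal(1/4))⁻¹ ≤ 2
      have h : ((1:ℝ≥0∞)/2) ≤ 1 - ENNReal.ofReal (1/4) := by
        refine ENNReal.le_sub_of_add_le_left (by simp) ?_
        calc ENNReal.ofReal (1/4) + (1:ℝ≥0∞)/2 ≤ 1/2 + 1/2 := by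
              gcongr
              rw [show ((1:ℝ≥0∞)/2) = ENNReal.ofReal (1/2) by
                rw [ENNReal.ofReal_div_of_pos (by norm_num), ENNReal.ofReal_one,
                  ENNReal.ofReal_ofNat]]
              exact ENNReal.ofReal_le_ofReal (by norm_num)
        _ = 1 := ENNReal.add_halves 1
      calc ((1:ℝ≥0∞) - ENNReal.ofReal (1/4))⁻¹ ≤ ((1:ℝ≥0∞)/2)⁻¹ := ENNReal.inv_le_inv' h
      _ = 2 := by simp
  _ = ENNReal.ofReal (8*μ₀*(n:ℝ)) := by
      rw [show ((2:ℝ≥0∞)) = ENNReal.ofReal 2 by simp, ← ENNReal.ofReal_mul (by positivity)]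
      congr 1
      ring

end RRound

open RRound

set_option maxHeartbeats 1600000 in
/-- randomized rounding: There are absolute constants
`c, C > 0` such that for any distribution `Δ` on `{0,1}^n`, any `y ∈ ℝⁿ`,
`μ₀ > 0`, `λ ∈ ℝ` with `P[|Σ bᵢyᵢ − λ| ≤ t] ≤ μ₀ t` for all `t ≥ √n`, there is
`y' ∈ ℤⁿ` with (R1) `‖y − y'‖_∞ ≤ 1`; (R2) `P[|Σ bᵢy'ᵢ − λ| ≤ t] ≤ C μ₀ t` for
`t ≥ √n`; (R3) `L(Σ bᵢy'ᵢ, √n) ≥ c·L(Σ bᵢyᵢ, √n)`; (R4) `|Σ yᵢ − Σ y'ᵢ| ≤ C√n`. -/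
theorem randomized_rounding :
    ∃ c C : ℝ, 0 < c ∧ 0 < C ∧
    ∀ (n : ℕ) (Ω : Type) (mΩ : MeasurableSpace Ω) (μ : Measure Ω),
      IsProbabilityMeasure μ →
    ∀ (b : Fin n → Ω → ℝ), (∀ i, Measurable (b i)) →
      (∀ i ω, b i ω = 0 ∨ b i ω = 1) →
    ∀ (y : Fin n → ℝ) (μ₀ lam : ℝ), 0 < μ₀ →
      (∀ t : ℝ, Real.sqrt n ≤ t →
        (μ {ω | |(∑ i, b i ω * y i) - lam| ≤ t}).toReal ≤ μ₀ * t) →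
    ∃ y' : Fin n → ℤ,
      (∀ i, |y i - (y' i : ℝ)| ≤ 1) ∧
      (∀ t : ℝ, Real.sqrt n ≤ t →
        (μ {ω | |(∑ i, b i ω * (y' i : ℝ)) - lam| ≤ t}).toReal ≤ C * μ₀ * t) ∧
      (c * ⨆ z : ℝ, (μ {ω | |(∑ i, b i ω * y i) - z| ≤ Real.sqrt n}).toReal
        ≤ ⨆ z : ℝ, (μ {ω | |(∑ i, b i ω * (y' i : ℝ)) - z| ≤ Real.sqrt n}).toReal) ∧
      (|(∑ i, y i) - ∑ i, (y' i : ℝ)| ≤ C * Real.sqrt n) := by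
  classical
  refine ⟨1/20, 100, by norm_num, by norm_num, ?_⟩
  intro n Ω mΩ μ hprob b hb hb01 y μ₀ lam hμ₀ hyp
  rcases Nat.eq_zero_or_pos n with hn0 | hn
  · -- trivial case n = 0
    subst hn0
    have hsq0 : Real.sqrt ((0:ℕ):ℝ) = 0 := by simp
    refine ⟨fun _ => 0, fun i => i.elim0, ?_, ?_, ?_⟩
    · intro t ht
      have h0 : ∀ ω, (∑ i : Fin 0, b i ω * (((fun _ => (0:ℤ)) i : ℤ):ℝ)) = ∑ i : Fin 0, b i ω * y i := by
        intro ω; simp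
      have hset : {ω | |(∑ i : Fin 0, b i ω * (((fun _ => (0:ℤ)) i : ℤ):ℝ)) - lam| ≤ t}
          = {ω | |(∑ i : Fin 0, b i ω * y i) - lam| ≤ t} := by
        ext ω; rw [Set.mem_setOf_eq, Set.mem_setOf_eq, h0 ω]
      rw [hset]
      have ht0 : 0 ≤ t := by rw [hsq0] at ht; exact ht
      have := hyp t ht
      nlinarith [mul_nonneg hμ₀.le ht0]
    · have hz : ∀ z : ℝ, {ω | |(∑ i : Fin 0, b i ω * (((fun _ => (0:ℤ)) i : ℤ):ℝ)) - z| ≤ Real.sqrt ((0:ℕ):ℝ)}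
          = {ω | |(∑ i : Fin 0, b i ω * y i) - z| ≤ Real.sqrt ((0:ℕ):ℝ)} := by
        intro z; ext ω; simp
      have hfe : (fun z : ℝ => (μ {ω | |(∑ i : Fin 0, b i ω * (((fun _ => (0:ℤ)) i : ℤ):ℝ)) - z| ≤ Real.sqrt ((0:ℕ):ℝ)}).toReal)
          = fun z : ℝ => (μ {ω | |(∑ i : Fin 0, b i ω * y i) - z| ≤ Real.sqrt ((0:ℕ):ℝ)}).toReal := by
        funext z; rw [hz z]
      have hnn : 0 ≤ ⨆ z : ℝ, (μ {ω | |(∑ i : Fin 0, b i ω * y i) - z| ≤ Real.sqrt ((0:ℕ):ℝ)}).toReal :=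
        Real.iSup_nonneg fun z => ENNReal.toReal_nonneg
      calc (1/20 : ℝ) * ⨆ z : ℝ, (μ {ω | |(∑ i : Fin 0, b i ω * y i) - z| ≤ Real.sqrt ((0:ℕ):ℝ)}).toReal
          ≤ 1 * ⨆ z : ℝ, (μ {ω | |(∑ i : Fin 0, b i ω * y i) - z| ≤ Real.sqrt ((0:ℕ):ℝ)}).toReal :=
            mul_le_mul_of_nonneg_right (by norm_num) hnn
      _ = ⨆ z : ℝ, (μ {ω | |(∑ i : Fin 0, b i ω * y i) - z| ≤ Real.sqrt ((0:ℕ):ℝ)}).toReal := one_mul _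
      _ = _ := by rw [hfe]
    · simp
  -- main case 1 ≤ n
  have hn1 : (1:ℝ) ≤ (n:ℝ) := by exact_mod_cast hn
  have hnpos : (0:ℝ) < (n:ℝ) := by linarith
  set r := Real.sqrt (n:ℝ) with hrdef
  have hr : 0 < r := Real.sqrt_pos.mpr hnpos
  have hr2 : r^2 = (n:ℝ) := Real.sq_sqrt hnpos.le
  set S : Ω → ℝ := fun ω => ∑ i, b i ω * y i with hSdef
  have hS : Measurable S := Finset.measurable_sum _ (fun i _ => (hb i).mul_const _)
  have hbabs : ∀ i ω, |b i ω| ≤ 1 := by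
    intro i ω; rcases hb01 i ω with h | h <;> rw [h] <;> norm_num
  set Y : (Fin n → Bool) → Fin n → ℤ := fun η i => ⌊y i⌋ + (if η i then 1 else 0) with hYdef
  have hyY : ∀ η i, y i - ((Y η i : ℤ) : ℝ) = ee y i (η i) := by
    intro η i
    have hYc : ((Y η i : ℤ):ℝ) = (⌊y i⌋ : ℝ) + (if η i then (1:ℝ) else 0) := by
      rw [hYdef]
      push_cast
      rcases η i <;> simp
    have hf : Int.fract (y i) = y i - ⌊y i⌋ := rfl
    rcases h : η i <;> simp only [hYc, h, ee] <;> rw [hf] <;> ring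
  set Mr : (Fin n → Bool) → Ω → ℝ := fun η ω => ∑ i, b i ω * ee y i (η i) with hMrdef
  have hMr : ∀ η, Measurable (Mr η) :=
    fun η => Finset.measurable_sum _ (fun i _ => (hb i).mul_const _)
  have hTS : ∀ η ω, (∑ i, b i ω * ((Y η i : ℤ):ℝ)) = S ω - Mr η ω := by
    intro η ω
    rw [hSdef, hMrdef]
    simp only
    rw [← Finset.sum_sub_distrib]
    refine Finset.sum_congr rfl fun i _ => ?_
    rw [← mul_sub]
    congr 1
    have := hyY η i
    linarith
  have hMompt : ∀ ω, ∑ η : Fin n → Bool, wgt y η * (Mr η ω)^4 ≤ (n:ℝ)^2 :=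
    fun ω => momBound y (fun i => b i ω) (fun i => hbabs i ω)
  set sfun : Ω → ℝ := fun ω => max r (|S ω - lam|/2) with hsfdef
  have hsf : Measurable sfun :=
    Measurable.max measurable_const ((hS.sub measurable_const).abs.div_const 2)
  have hsf_lb : ∀ ω, r ≤ sfun ω := fun ω => le_max_left _ _
  have hsf_pos : ∀ ω, 0 < sfun ω := fun ω => lt_of_lt_of_le hr (hsf_lb ω)
  set Fc : (Fin n → Bool) → Ω → ℝ :=
    fun η ω => if sfun ω ≤ |Mr η ω| then |Mr η ω| else 0 with hFcdef
  have hFc : ∀ η, Measurable (Fc η) := by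
    intro η
    exact Measurable.ite (measurableSet_le hsf (hMr η).abs) (hMr η).abs measurable_const
  have hFc0 : ∀ η ω, 0 ≤ Fc η ω := by
    intro η ω; rw [hFcdef]; dsimp only; split
    · exact abs_nonneg _
    · exact le_refl 0
  set W : (Fin n → Bool) → ℝ≥0∞ := fun η => ∫⁻ ω, ENNReal.ofReal (Fc η ω) ∂μ with hWdef
  -- pointwise 4th-moment domination
  have hFpt : ∀ η ω, Fc η ω ≤ (Mr η ω)^4 / (sfun ω)^3 := by
    intro η ω
    rw [hFcdef]; dsimp only
    split
    · rename_i h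
      have hs3 : (0:ℝ) < (sfun ω)^3 := pow_pos (hsf_pos ω) 3
      rw [le_div_iff₀ hs3]
      have hM4 : (Mr η ω)^4 = |Mr η ω|^4 := by
        rw [pow_abs, abs_of_nonneg (by positivity)]
      rw [hM4]
      calc |Mr η ω| * (sfun ω)^3 ≤ |Mr η ω| * |Mr η ω|^3 := by
            refine mul_le_mul_of_nonneg_left ?_ (abs_nonneg _)
            exact pow_le_pow_left₀ (hsf_pos ω).le h 3
      _ = |Mr η ω|^4 := by ring
    · positivity
  have hWsum : ∑ η : Fin n → Bool, ENNReal.ofReal (wgt y η) * W η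
      ≤ ENNReal.ofReal (8*μ₀*(n:ℝ)) := by
    have step1 : ∀ η : Fin n → Bool, ENNReal.ofReal (wgt y η) * W η
        = ∫⁻ ω, ENNReal.ofReal (wgt y η) * ENNReal.ofReal (Fc η ω) ∂μ :=
      fun η => (lintegral_const_mul _ ((hFc η).ennreal_ofReal)).symm
    rw [Finset.sum_congr rfl (fun η _ => step1 η)]
    rw [← lintegral_finset_sum _ (f := fun η ω => ENNReal.ofReal (wgt y η) * ENNReal.ofReal (Fc η ω)) (fun η _ => measurable_const.mul ((hFc η).ennreal_ofReal))]
    refine le_trans (lintegral_mono fun ω => ?_)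
      (shell_bound μ S hS lam μ₀ hμ₀ hn hyp)
    have he : ∑ η : Fin n → Bool, ENNReal.ofReal (wgt y η) * ENNReal.ofReal (Fc η ω)
        = ENNReal.ofReal (∑ η : Fin n → Bool, wgt y η * Fc η ω) := by
      rw [ENNReal.ofReal_sum_of_nonneg
        (fun η _ => mul_nonneg (wgt_nonneg y η) (hFc0 η ω))]
      exact Finset.sum_congr rfl fun η _ =>
        (ENNReal.ofReal_mul (wgt_nonneg y η)).symm
    rw [he]
    refine ENNReal.ofReal_le_ofReal ?_
    have hs3 : (0:ℝ) < (sfun ω)^3 := pow_pos (hsf_pos ω) 3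
    calc ∑ η : Fin n → Bool, wgt y η * Fc η ω
        ≤ ∑ η : Fin n → Bool, wgt y η * ((Mr η ω)^4 / (sfun ω)^3) :=
          Finset.sum_le_sum fun η _ =>
            mul_le_mul_of_nonneg_left (hFpt η ω) (wgt_nonneg y η)
    _ = (∑ η : Fin n → Bool, wgt y η * (Mr η ω)^4) / (sfun ω)^3 := by
          rw [Finset.sum_div]
          exact Finset.sum_congr rfl fun η _ => (mul_div_assoc _ _ _).symm
    _ ≤ (n:ℝ)^2 / (sfun ω)^3 := by
          gcongr
          exact hMompt ω
  -- (B2) Markov bound for the W condition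
  have hB2 : ∑ η : Fin n → Bool,
      wgt y η * (if W η ≤ ENNReal.ofReal (64*μ₀*(n:ℝ)) then (0:ℝ) else 1) ≤ 1/8 := by
    set A : ℝ≥0∞ := ENNReal.ofReal (64*μ₀*(n:ℝ)) with hAdef
    have hA0 : A ≠ 0 := by
      rw [hAdef, Ne, ENNReal.ofReal_eq_zero, not_le]
      positivity
    have hAtop : A ≠ ⊤ := ENNReal.ofReal_ne_top
    have hkey : ∑ η : Fin n → Bool,
        ENNReal.ofReal (wgt y η) * (if W η ≤ A then (0:ℝ≥0∞) else 1)
        ≤ ENNReal.ofReal (1/8) := by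
      calc ∑ η : Fin n → Bool, ENNReal.ofReal (wgt y η) * (if W η ≤ A then (0:ℝ≥0∞) else 1)
          ≤ ∑ η : Fin n → Bool, (ENNReal.ofReal (wgt y η) * W η) * A⁻¹ := by
            refine Finset.sum_le_sum fun η _ => ?_
            split
            · simp
            · rename_i h
              have hAW : A ≤ W η := le_of_not_ge h
              have h1 : (1:ℝ≥0∞) ≤ W η * A⁻¹ := by
                rw [← div_eq_mul_inv, ENNReal.le_div_iff_mul_le (Or.inl hA0) (Or.inl hAtop),
                  one_mul]
                exact hAW
              have h2 := mul_le_mul_right h1 (ENNReal.ofReal (wgt y η))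
              rw [← mul_assoc] at h2
              exact h2
      _ = (∑ η : Fin n → Bool, ENNReal.ofReal (wgt y η) * W η) * A⁻¹ := by
            rw [← Finset.sum_mul]
      _ ≤ ENNReal.ofReal (8*μ₀*(n:ℝ)) * A⁻¹ := mul_le_mul_left hWsum _
      _ = ENNReal.ofReal (8*μ₀*(n:ℝ)) / A := (div_eq_mul_inv _ _).symm
      _ = ENNReal.ofReal ((8*μ₀*(n:ℝ))/(64*μ₀*(n:ℝ))) := by
            rw [hAdef, ← ENNReal.ofReal_div_of_pos (by positivity)]
      _ = ENNReal.ofReal (1/8) := by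
            congr 1
            rw [div_eq_div_iff (by positivity) (by norm_num)]
            ring
    have hconv : ENNReal.ofReal (∑ η : Fin n → Bool,
        wgt y η * (if W η ≤ A then (0:ℝ) else 1))
        = ∑ η : Fin n → Bool, ENNReal.ofReal (wgt y η) * (if W η ≤ A then (0:ℝ≥0∞) else 1) := by
      rw [ENNReal.ofReal_sum_of_nonneg (fun η _ => by
        refine mul_nonneg (wgt_nonneg y η) ?_
        split <;> norm_num)]
      refine Finset.sum_congr rfl fun η _ => ?_
      split
      · simp
      · simp [ENNReal.ofReal_mul (wgt_nonneg y η)]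
    rw [← ENNReal.ofReal_le_ofReal_iff (by norm_num : (0:ℝ) ≤ 1/8), hconv]
    exact hkey
  -- (B4) Markov bound for the sum condition
  have hB4 : ∑ η : Fin n → Bool,
      wgt y η * (if |∑ i, ee y i (η i)| ≤ 2*r then (0:ℝ) else 1) ≤ 1/16 := by
    have hmb := momBound y (fun _ => 1) (fun i => by norm_num)
    simp only [one_mul] at hmb
    have hn2 : (0:ℝ) < 16*(n:ℝ)^2 := by positivity
    calc ∑ η : Fin n → Bool, wgt y η * (if |∑ i, ee y i (η i)| ≤ 2*r then (0:ℝ) else 1)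
        ≤ ∑ η : Fin n → Bool, wgt y η * ((∑ i, ee y i (η i))^4 / (16*(n:ℝ)^2)) := by
          refine Finset.sum_le_sum fun η _ => ?_
          by_cases h : |∑ i, ee y i (η i)| ≤ 2*r
          · rw [if_pos h, mul_zero]
            exact mul_nonneg (wgt_nonneg y η) (by positivity)
          · rw [if_neg h]
            push_neg at h
            have h1 : (2*r)^4 ≤ |∑ i, ee y i (η i)|^4 :=
              pow_le_pow_left₀ (by positivity) h.le 4
            have h2 : |∑ i, ee y i (η i)|^4 = (∑ i, ee y i (η i))^4 := by
              rw [pow_abs, abs_of_nonneg (by positivity)]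
            have h3 : (2*r)^4 = 16*(n:ℝ)^2 := by
              have : (2*r)^4 = 16*(r^2)^2 := by ring
              rw [this, hr2]
            have h4 : (1:ℝ) ≤ (∑ i, ee y i (η i))^4 / (16*(n:ℝ)^2) := by
              rw [le_div_iff₀ hn2, one_mul]
              rw [← h2, ← h3]
              exact h1
            exact mul_le_mul_of_nonneg_left h4 (wgt_nonneg y η)
    _ = (∑ η : Fin n → Bool, wgt y η * (∑ i, ee y i (η i))^4) / (16*(n:ℝ)^2) := by
          rw [Finset.sum_div]
          exact Finset.sum_congr rfl fun η _ => (mul_div_assoc _ _ _).symm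
    _ ≤ (n:ℝ)^2 / (16*(n:ℝ)^2) := by
          gcongr
    _ = 1/16 := by
          rw [div_eq_div_iff hn2.ne' (by norm_num)]
          ring
  -- (B3) Markov bound for the concentration condition, for any recentering z₀
  have hB3 : ∀ z₀ : ℝ, ∑ η : Fin n → Bool,
      wgt y η * (if (μ {ω | |S ω - z₀| ≤ r}).toReal
        ≤ 2*(μ ({ω | |S ω - z₀| ≤ r} ∩ {ω | |Mr η ω| ≤ 4*r})).toReal then (0:ℝ) else 1)
      ≤ 1/128 := by
    intro z₀
    set D : Set Ω := {ω | |S ω - z₀| ≤ r} with hDdef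
    have hD : MeasurableSet D :=
      measurableSet_le ((hS.sub measurable_const).abs) measurable_const
    have hBset : ∀ η, MeasurableSet {ω | |Mr η ω| ≤ 4*r} :=
      fun η => measurableSet_le ((hMr η).abs) measurable_const
    set d : ℝ := (μ D).toReal with hddef
    by_cases hd : d ≤ 0
    · have hall : ∀ η : Fin n → Bool, (if d ≤ 2*(μ (D ∩ {ω | |Mr η ω| ≤ 4*r})).toReal
          then (0:ℝ) else 1) = 0 := by
        intro η
        exact if_pos (le_trans hd (by positivity))
      rw [Finset.sum_congr rfl (fun η _ => by rw [hall η, mul_zero])]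
      simp
    push_neg at hd
    have hCmeas : ∀ η : Fin n → Bool, MeasurableSet (D ∩ {ω | 4*r < |Mr η ω|}) :=
      fun η => hD.inter (measurableSet_lt measurable_const (hMr η).abs)
    have hkey : ∑ η : Fin n → Bool,
        ENNReal.ofReal (wgt y η) * μ (D ∩ {ω | 4*r < |Mr η ω|})
        ≤ ENNReal.ofReal (1/256) * μ D := by
      have step1 : ∀ η : Fin n → Bool,
          ENNReal.ofReal (wgt y η) * μ (D ∩ {ω | 4*r < |Mr η ω|})
          = ∫⁻ ω, ENNReal.ofReal (wgt y η)
              * (D ∩ {ω | 4*r < |Mr η ω|}).indicator 1 ω ∂μ := by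
        intro η
        rw [lintegral_const_mul _ (measurable_one.indicator (hCmeas η)),
          lintegral_indicator_one (hCmeas η)]
      rw [Finset.sum_congr rfl (fun η _ => step1 η)]
      rw [← lintegral_finset_sum _ (f := fun η ω => ENNReal.ofReal (wgt y η)
          * (D ∩ {ω | 4*r < |Mr η ω|}).indicator 1 ω) (fun η _ =>
        measurable_const.mul (measurable_one.indicator (hCmeas η)))]
      calc ∫⁻ ω, (∑ η : Fin n → Bool, ENNReal.ofReal (wgt y η)
              * (D ∩ {ω | 4*r < |Mr η ω|}).indicator 1 ω) ∂μ
          ≤ ∫⁻ ω, ENNReal.ofReal (1/256) * D.indicator 1 ω ∂μ := by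
            refine lintegral_mono fun ω => ?_
            by_cases hω : ω ∈ D
            · have hind : ∀ η : Fin n → Bool,
                  (D ∩ {ω' | 4*r < |Mr η ω'|}).indicator (1 : Ω → ℝ≥0∞) ω
                  = ENNReal.ofReal (if 4*r < |Mr η ω| then (1:ℝ) else 0) := by
                intro η
                by_cases h2 : 4*r < |Mr η ω|
                · rw [Set.indicator_of_mem
                      (show ω ∈ D ∩ {ω' | 4*r < |Mr η ω'|} from ⟨hω, h2⟩), if_pos h2]
                  simp
                · rw [Set.indicator_of_notMem (fun hmem => h2 hmem.2), if_neg h2]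
                  simp
              rw [Finset.sum_congr rfl (fun η _ => by rw [hind η])]
              rw [Set.indicator_of_mem hω, Pi.one_apply, mul_one]
              have hsum : ∑ η : Fin n → Bool, ENNReal.ofReal (wgt y η)
                  * ENNReal.ofReal (if 4*r < |Mr η ω| then (1:ℝ) else 0)
                  = ENNReal.ofReal (∑ η : Fin n → Bool,
                      wgt y η * (if 4*r < |Mr η ω| then (1:ℝ) else 0)) := by
                rw [ENNReal.ofReal_sum_of_nonneg (fun η _ => by
                  refine mul_nonneg (wgt_nonneg y η) ?_
                  split <;> norm_num)]
                exact Finset.sum_congr rfl fun η _ =>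
                  (ENNReal.ofReal_mul (wgt_nonneg y η)).symm
              rw [hsum]
              refine ENNReal.ofReal_le_ofReal ?_
              have hn2 : (0:ℝ) < 256*(n:ℝ)^2 := by positivity
              calc ∑ η : Fin n → Bool, wgt y η * (if 4*r < |Mr η ω| then (1:ℝ) else 0)
                  ≤ ∑ η : Fin n → Bool, wgt y η * ((Mr η ω)^4 / (256*(n:ℝ)^2)) := by
                    refine Finset.sum_le_sum fun η _ => ?_
                    by_cases h2 : 4*r < |Mr η ω|
                    · rw [if_pos h2]
                      have h1 : (4*r)^4 ≤ |Mr η ω|^4 :=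
                        pow_le_pow_left₀ (by positivity) h2.le 4
                      have h2' : |Mr η ω|^4 = (Mr η ω)^4 := by
                        rw [pow_abs, abs_of_nonneg (by positivity)]
                      have h3 : (4*r)^4 = 256*(n:ℝ)^2 := by
                        have : (4*r)^4 = 256*(r^2)^2 := by ring
                        rw [this, hr2]
                      have h4 : (1:ℝ) ≤ (Mr η ω)^4 / (256*(n:ℝ)^2) := by
                        rw [le_div_iff₀ hn2, one_mul, ← h2', ← h3]
                        exact h1
                      exact mul_le_mul_of_nonneg_left h4 (wgt_nonneg y η)
                    · rw [if_neg h2, mul_zero]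
                      exact mul_nonneg (wgt_nonneg y η) (by positivity)
              _ = (∑ η : Fin n → Bool, wgt y η * (Mr η ω)^4) / (256*(n:ℝ)^2) := by
                    rw [Finset.sum_div]
                    exact Finset.sum_congr rfl fun η _ => (mul_div_assoc _ _ _).symm
              _ ≤ (n:ℝ)^2 / (256*(n:ℝ)^2) := by
                    gcongr
                    exact hMompt ω
              _ = 1/256 := by
                    rw [div_eq_div_iff hn2.ne' (by norm_num)]
                    ring
            · have hind0 : ∀ η : Fin n → Bool,
                  (D ∩ {ω' | 4*r < |Mr η ω'|}).indicator (1 : Ω → ℝ≥0∞) ω = 0 :=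
                fun η => Set.indicator_of_notMem (fun hmem => hω hmem.1) _
              rw [Finset.sum_congr rfl (fun η _ => by rw [hind0 η, mul_zero])]
              simp
      _ = ENNReal.ofReal (1/256) * μ D := by
            rw [lintegral_const_mul _ (measurable_one.indicator hD),
              lintegral_indicator_one hD]
    -- convert to real
    have hreal : ∑ η : Fin n → Bool,
        wgt y η * (μ (D ∩ {ω | 4*r < |Mr η ω|})).toReal ≤ (1/256) * d := by
      have hfin : ENNReal.ofReal (1/256) * μ D ≠ ⊤ :=
        ENNReal.mul_ne_top ENNReal.ofReal_ne_top (measure_ne_top μ D)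
      have h1 := ENNReal.toReal_mono hfin hkey
      rw [ENNReal.toReal_sum (fun η _ =>
        ENNReal.mul_ne_top ENNReal.ofReal_ne_top (measure_ne_top μ _))] at h1
      have h2 : ∀ η : Fin n → Bool,
          (ENNReal.ofReal (wgt y η) * μ (D ∩ {ω | 4*r < |Mr η ω|})).toReal
          = wgt y η * (μ (D ∩ {ω | 4*r < |Mr η ω|})).toReal := by
        intro η
        rw [ENNReal.toReal_mul, ENNReal.toReal_ofReal (wgt_nonneg y η)]
      rw [Finset.sum_congr rfl (fun η _ => h2 η)] at h1
      rw [ENNReal.toReal_mul, ENNReal.toReal_ofReal (by norm_num : (0:ℝ) ≤ 1/256)] at h1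
      exact h1
    -- Markov
    calc ∑ η : Fin n → Bool,
        wgt y η * (if d ≤ 2*(μ (D ∩ {ω | |Mr η ω| ≤ 4*r})).toReal then (0:ℝ) else 1)
        ≤ ∑ η : Fin n → Bool,
          wgt y η * ((2/d) * (μ (D ∩ {ω | 4*r < |Mr η ω|})).toReal) := by
          refine Finset.sum_le_sum fun η _ => ?_
          by_cases h : d ≤ 2*(μ (D ∩ {ω | |Mr η ω| ≤ 4*r})).toReal
          · rw [if_pos h, mul_zero]
            exact mul_nonneg (wgt_nonneg y η) (mul_nonneg (by positivity) ENNReal.toReal_nonneg)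
          · rw [if_neg h]
            push_neg at h
            have hsplit : μ (D ∩ {ω | |Mr η ω| ≤ 4*r}) + μ (D ∩ {ω | 4*r < |Mr η ω|}) = μ D := by
              have hce : D \ {ω | |Mr η ω| ≤ 4*r} = D ∩ {ω | 4*r < |Mr η ω|} := by
                ext ω
                simp [Set.mem_diff, Set.mem_inter_iff, not_le]
              rw [← hce]
              exact measure_inter_add_diff D (hBset η)
            have hsplit' : (μ (D ∩ {ω | |Mr η ω| ≤ 4*r})).toReal
                + (μ (D ∩ {ω | 4*r < |Mr η ω|})).toReal = d := by
              rw [hddef, ← hsplit]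
              exact (ENNReal.toReal_add (measure_ne_top μ _) (measure_ne_top μ _)).symm
            have hrr : d/2 ≤ (μ (D ∩ {ω | 4*r < |Mr η ω|})).toReal := by linarith
            have h1 : (1:ℝ) ≤ (2/d) * (μ (D ∩ {ω | 4*r < |Mr η ω|})).toReal := by
              rw [div_mul_eq_mul_div, le_div_iff₀ hd]
              linarith
            exact mul_le_mul_of_nonneg_left h1 (wgt_nonneg y η)
    _ = (2/d) * ∑ η : Fin n → Bool, wgt y η * (μ (D ∩ {ω | 4*r < |Mr η ω|})).toReal := by
          rw [Finset.mul_sum]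
          exact Finset.sum_congr rfl fun η _ => by ring
    _ ≤ (2/d) * ((1/256) * d) := by
          refine mul_le_mul_of_nonneg_left hreal (by positivity)
    _ = 1/128 := by
          field_simp
          norm_num
  -- selection of a good rounding
  have hsel : ∀ z₀ : ℝ, ∃ η : Fin n → Bool,
      (W η ≤ ENNReal.ofReal (64*μ₀*(n:ℝ))) ∧
      ((μ {ω | |S ω - z₀| ≤ r}).toReal
        ≤ 2*(μ ({ω | |S ω - z₀| ≤ r} ∩ {ω | |Mr η ω| ≤ 4*r})).toReal) ∧
      (|∑ i, ee y i (η i)| ≤ 2*r) := by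
    intro z₀
    by_contra hno
    rw [not_exists] at hno
    have hge : ∀ η : Fin n → Bool, (1:ℝ) ≤
        (if W η ≤ ENNReal.ofReal (64*μ₀*(n:ℝ)) then (0:ℝ) else 1)
        + (if (μ {ω | |S ω - z₀| ≤ r}).toReal
            ≤ 2*(μ ({ω | |S ω - z₀| ≤ r} ∩ {ω | |Mr η ω| ≤ 4*r})).toReal then (0:ℝ) else 1)
        + (if |∑ i, ee y i (η i)| ≤ 2*r then (0:ℝ) else 1) := by
      intro η
      by_cases h1 : W η ≤ ENNReal.ofReal (64*μ₀*(n:ℝ))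
      · by_cases h2 : (μ {ω | |S ω - z₀| ≤ r}).toReal
            ≤ 2*(μ ({ω | |S ω - z₀| ≤ r} ∩ {ω | |Mr η ω| ≤ 4*r})).toReal
        · by_cases h3 : |∑ i, ee y i (η i)| ≤ 2*r
          · exact absurd ⟨h1, h2, h3⟩ (hno η)
          · rw [if_pos h1, if_pos h2, if_neg h3]; norm_num
        · rw [if_pos h1, if_neg h2]
          split <;> norm_num
      · rw [if_neg h1]
        split <;> split <;> norm_num
    have hcontr : (1:ℝ) ≤ 25/128 := by
      calc (1:ℝ) = ∑ η : Fin n → Bool, wgt y η := (wgt_sum y).symm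
      _ ≤ ∑ η : Fin n → Bool, wgt y η *
          ((if W η ≤ ENNReal.ofReal (64*μ₀*(n:ℝ)) then (0:ℝ) else 1)
          + (if (μ {ω | |S ω - z₀| ≤ r}).toReal
              ≤ 2*(μ ({ω | |S ω - z₀| ≤ r} ∩ {ω | |Mr η ω| ≤ 4*r})).toReal then (0:ℝ) else 1)
          + (if |∑ i, ee y i (η i)| ≤ 2*r then (0:ℝ) else 1)) := by
            refine Finset.sum_le_sum fun η _ => ?_
            have h := mul_le_mul_of_nonneg_left (hge η) (wgt_nonneg y η)
            rw [mul_one] at h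
            exact h
      _ = (∑ η : Fin n → Bool, wgt y η *
            (if W η ≤ ENNReal.ofReal (64*μ₀*(n:ℝ)) then (0:ℝ) else 1))
          + (∑ η : Fin n → Bool, wgt y η *
            (if (μ {ω | |S ω - z₀| ≤ r}).toReal
              ≤ 2*(μ ({ω | |S ω - z₀| ≤ r} ∩ {ω | |Mr η ω| ≤ 4*r})).toReal then (0:ℝ) else 1))
          + (∑ η : Fin n → Bool, wgt y η *
            (if |∑ i, ee y i (η i)| ≤ 2*r then (0:ℝ) else 1)) := by
            rw [← Finset.sum_add_distrib, ← Finset.sum_add_distrib]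
            exact Finset.sum_congr rfl fun η _ => by ring
      _ ≤ 1/8 + 1/128 + 1/16 := add_le_add (add_le_add hB2 (hB3 z₀)) hB4
      _ = 25/128 := by norm_num
    linarith
  -- uniform small-ball conclusion (R2) for any good η
  have hR2 : ∀ η : Fin n → Bool, W η ≤ ENNReal.ofReal (64*μ₀*(n:ℝ)) →
      ∀ t : ℝ, r ≤ t →
      (μ {ω | |(∑ i, b i ω * ((Y η i : ℤ):ℝ)) - lam| ≤ t}).toReal ≤ 100 * μ₀ * t := by
    intro η hWη t ht
    have ht0 : 0 < t := lt_of_lt_of_le hr ht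
    have hsetA : {ω | |(∑ i, b i ω * ((Y η i : ℤ):ℝ)) - lam| ≤ t}
        = {ω | |S ω - Mr η ω - lam| ≤ t} := by
      ext ω
      rw [Set.mem_setOf_eq, Set.mem_setOf_eq, hTS η ω]
    rw [hsetA]
    have hA : MeasurableSet {ω | |S ω - Mr η ω - lam| ≤ t} :=
      measurableSet_le (((hS.sub (hMr η)).sub measurable_const).abs) measurable_const
    have hBm : MeasurableSet {ω | |S ω - lam| ≤ 2*t} :=
      measurableSet_le ((hS.sub measurable_const).abs) measurable_const
    have hind : ∀ ω, ({ω' | |S ω' - Mr η ω' - lam| ≤ t}).indicator (1 : Ω → ℝ≥0∞) ω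
        ≤ ({ω' | |S ω' - lam| ≤ 2*t}).indicator (1 : Ω → ℝ≥0∞) ω
          + ENNReal.ofReal (Fc η ω * (1/t)) := by
      intro ω
      by_cases hωA : ω ∈ {ω' | |S ω' - Mr η ω' - lam| ≤ t}
      · by_cases hωB : ω ∈ {ω' | |S ω' - lam| ≤ 2*t}
        · rw [Set.indicator_of_mem hωA, Set.indicator_of_mem hωB]
          exact le_self_add
        · rw [Set.indicator_of_mem hωA, Set.indicator_of_notMem hωB, zero_add]
          have hA' : |S ω - Mr η ω - lam| ≤ t := hωA
          have hB' : ¬ (|S ω - lam| ≤ 2*t) := hωB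
          push_neg at hB'
          have habs : |S ω - lam| - |S ω - Mr η ω - lam| ≤ |Mr η ω| := by
            have h := abs_sub_abs_le_abs_sub (S ω - lam) (S ω - Mr η ω - lam)
            have he : (S ω - lam) - (S ω - Mr η ω - lam) = Mr η ω := by ring
            rw [he] at h
            exact h
          have hM1 : t < |Mr η ω| := by linarith
          have hM2 : |S ω - lam|/2 ≤ |Mr η ω| := by linarith
          have hsM : sfun ω ≤ |Mr η ω| :=
            max_le (le_of_lt (lt_of_le_of_lt ht hM1)) hM2
          have hFeq : Fc η ω = |Mr η ω| := by
            simp only [hFcdef]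
            rw [if_pos hsM]
          refine ENNReal.one_le_ofReal.mpr ?_
          rw [hFeq, mul_one_div, le_div_iff₀ ht0, one_mul]
          exact hM1.le
      · rw [Set.indicator_of_notMem hωA]
        exact zero_le
    have hchain : μ {ω | |S ω - Mr η ω - lam| ≤ t} ≤ ENNReal.ofReal (100*μ₀*t) := by
      calc μ {ω | |S ω - Mr η ω - lam| ≤ t}
          = ∫⁻ ω, ({ω' | |S ω' - Mr η ω' - lam| ≤ t}).indicator 1 ω ∂μ :=
            (lintegral_indicator_one hA).symm
      _ ≤ ∫⁻ ω, (({ω' | |S ω' - lam| ≤ 2*t}).indicator 1 ω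
            + ENNReal.ofReal (Fc η ω * (1/t))) ∂μ := lintegral_mono hind
      _ = μ {ω | |S ω - lam| ≤ 2*t}
            + (∫⁻ ω, ENNReal.ofReal (Fc η ω) ∂μ) * ENNReal.ofReal (1/t) := by
          rw [lintegral_add_left (measurable_one.indicator hBm)]
          rw [lintegral_indicator_one hBm]
          congr 1
          have hco : ∀ ω, ENNReal.ofReal (Fc η ω * (1/t))
              = ENNReal.ofReal (Fc η ω) * ENNReal.ofReal (1/t) :=
            fun ω => ENNReal.ofReal_mul (hFc0 η ω)
          rw [lintegral_congr hco]
          exact lintegral_mul_const _ ((hFc η).ennreal_ofReal)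
      _ ≤ ENNReal.ofReal (μ₀*(2*t)) + ENNReal.ofReal (64*μ₀*(n:ℝ)) * ENNReal.ofReal (1/t) := by
          gcongr
          rw [ENNReal.le_ofReal_iff_toReal_le (measure_ne_top μ _)
            (by positivity)]
          exact hyp (2*t) (by linarith)
      _ ≤ ENNReal.ofReal (100*μ₀*t) := by
          rw [← ENNReal.ofReal_mul (by positivity),
            ← ENNReal.ofReal_add (by positivity) (by positivity)]
          refine ENNReal.ofReal_le_ofReal ?_
          have hnt : (n:ℝ) ≤ t^2 := by
            rw [← hr2]
            exact pow_le_pow_left₀ hr.le ht 2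
          have h64 : 64*μ₀*(n:ℝ)*(1/t) ≤ 64*μ₀*t := by
            rw [mul_one_div, div_le_iff₀ ht0]
            nlinarith
          nlinarith [mul_pos hμ₀ ht0]
    exact ENNReal.toReal_le_of_le_ofReal
      (by positivity) hchain
  -- (R1) and (R4) helpers
  have hR1 : ∀ η : Fin n → Bool, ∀ i, |y i - ((Y η i : ℤ):ℝ)| ≤ 1 := by
    intro η i
    rw [hyY η i]
    exact ee_abs_le y i (η i)
  have hR4 : ∀ η : Fin n → Bool, |∑ i, ee y i (η i)| ≤ 2*r →
      |(∑ i, y i) - ∑ i, ((Y η i : ℤ):ℝ)| ≤ 100 * r := by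
    intro η h4
    have he : (∑ i, y i) - ∑ i, ((Y η i : ℤ):ℝ) = ∑ i, ee y i (η i) := by
      rw [← Finset.sum_sub_distrib]
      exact Finset.sum_congr rfl fun i _ => hyY η i
    rw [he]
    linarith [hr.le]
  -- case split on whether the Lévy concentration of S is positive
  by_cases hL : 0 < ⨆ z : ℝ, (μ {ω | |(∑ i, b i ω * y i) - z| ≤ r}).toReal
  · -- main branch
    obtain ⟨z₀, hz₀⟩ := exists_lt_of_lt_ciSup
      (show (⨆ z : ℝ, (μ {ω | |(∑ i, b i ω * y i) - z| ≤ r}).toReal)/2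
        < ⨆ z : ℝ, (μ {ω | |(∑ i, b i ω * y i) - z| ≤ r}).toReal by linarith)
    obtain ⟨η, hWη, h3, h4⟩ := hsel z₀
    refine ⟨Y η, hR1 η, hR2 η hWη, ?_, hR4 η h4⟩
    -- (R3)
    have hDeq : {ω | |(∑ i, b i ω * y i) - z₀| ≤ r} = {ω | |S ω - z₀| ≤ r} := by
      simp only [hSdef]
    rw [hDeq] at hz₀
    have hd0 : 0 < (μ {ω | |S ω - z₀| ≤ r}).toReal := lt_of_le_of_lt (by positivity) hz₀
    -- inclusion into the 5√n-ball around z₀ for the rounded sum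
    have hsub1 : {ω | |S ω - z₀| ≤ r} ∩ {ω | |Mr η ω| ≤ 4*r}
        ⊆ {ω | |(∑ i, b i ω * ((Y η i : ℤ):ℝ)) - z₀| ≤ 5*r} := by
      rintro ω ⟨h1, h2⟩
      rw [Set.mem_setOf_eq, hTS η ω]
      have h1' : |S ω - z₀| ≤ r := h1
      have h2' : |Mr η ω| ≤ 4*r := h2
      have heq : S ω - Mr η ω - z₀ = (S ω - z₀) + (-(Mr η ω)) := by ring
      rw [heq]
      have habs : |(S ω - z₀) + (-(Mr η ω))| ≤ |S ω - z₀| + |Mr η ω| := by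
        refine le_trans (abs_add_le _ _) ?_
        rw [abs_neg]
      linarith
    -- covering of the 5√n-ball by five √n-balls
    have hcov : {ω | |(∑ i, b i ω * ((Y η i : ℤ):ℝ)) - z₀| ≤ 5*r}
        ⊆ {ω | |(∑ i, b i ω * ((Y η i : ℤ):ℝ)) - (z₀ - 4*r)| ≤ r}
          ∪ ({ω | |(∑ i, b i ω * ((Y η i : ℤ):ℝ)) - (z₀ - 2*r)| ≤ r}
          ∪ ({ω | |(∑ i, b i ω * ((Y η i : ℤ):ℝ)) - z₀| ≤ r}
          ∪ ({ω | |(∑ i, b i ω * ((Y η i : ℤ):ℝ)) - (z₀ + 2*r)| ≤ r}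
          ∪ {ω | |(∑ i, b i ω * ((Y η i : ℤ):ℝ)) - (z₀ + 4*r)| ≤ r}))) := by
      intro ω hω
      rw [Set.mem_setOf_eq, abs_le] at hω
      obtain ⟨hω1, hω2⟩ := hω
      rcases le_total ((∑ i, b i ω * ((Y η i : ℤ):ℝ)) - z₀) (-3*r) with h | h
      · left
        rw [Set.mem_setOf_eq, abs_le]
        constructor <;> linarith
      · rcases le_total ((∑ i, b i ω * ((Y η i : ℤ):ℝ)) - z₀) (-r) with h' | h'
        · right; left
          rw [Set.mem_setOf_eq, abs_le]
          constructor <;> linarith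
        · rcases le_total ((∑ i, b i ω * ((Y η i : ℤ):ℝ)) - z₀) r with h'' | h''
          · right; right; left
            rw [Set.mem_setOf_eq, abs_le]
            constructor <;> linarith
          · rcases le_total ((∑ i, b i ω * ((Y η i : ℤ):ℝ)) - z₀) (3*r) with h3' | h3'
            · right; right; right; left
              rw [Set.mem_setOf_eq, abs_le]
              constructor <;> linarith
            · right; right; right; right
              rw [Set.mem_setOf_eq, abs_le]
              constructor <;> linarith
    have hbdd : BddAbove (Set.range fun z : ℝ =>
        (μ {ω | |(∑ i, b i ω * ((Y η i : ℤ):ℝ)) - z| ≤ r}).toReal) := by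
      refine ⟨1, ?_⟩
      rintro x ⟨z, rfl⟩
      exact le_trans (ENNReal.toReal_mono ENNReal.one_ne_top prob_le_one) (by simp)
    have hne1 : μ {ω | |(∑ i, b i ω * ((Y η i : ℤ):ℝ)) - (z₀ + 2*r)| ≤ r}
        + μ {ω | |(∑ i, b i ω * ((Y η i : ℤ):ℝ)) - (z₀ + 4*r)| ≤ r} ≠ ⊤ :=
      ENNReal.add_ne_top.mpr ⟨measure_ne_top μ _, measure_ne_top μ _⟩
    have hne2 : μ {ω | |(∑ i, b i ω * ((Y η i : ℤ):ℝ)) - z₀| ≤ r}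
        + (μ {ω | |(∑ i, b i ω * ((Y η i : ℤ):ℝ)) - (z₀ + 2*r)| ≤ r}
        + μ {ω | |(∑ i, b i ω * ((Y η i : ℤ):ℝ)) - (z₀ + 4*r)| ≤ r}) ≠ ⊤ :=
      ENNReal.add_ne_top.mpr ⟨measure_ne_top μ _, hne1⟩
    have hne3 : μ {ω | |(∑ i, b i ω * ((Y η i : ℤ):ℝ)) - (z₀ - 2*r)| ≤ r}
        + (μ {ω | |(∑ i, b i ω * ((Y η i : ℤ):ℝ)) - z₀| ≤ r}
        + (μ {ω | |(∑ i, b i ω * ((Y η i : ℤ):ℝ)) - (z₀ + 2*r)| ≤ r}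
        + μ {ω | |(∑ i, b i ω * ((Y η i : ℤ):ℝ)) - (z₀ + 4*r)| ≤ r})) ≠ ⊤ :=
      ENNReal.add_ne_top.mpr ⟨measure_ne_top μ _, hne2⟩
    have hne4 : μ {ω | |(∑ i, b i ω * ((Y η i : ℤ):ℝ)) - (z₀ - 4*r)| ≤ r}
        + (μ {ω | |(∑ i, b i ω * ((Y η i : ℤ):ℝ)) - (z₀ - 2*r)| ≤ r}
        + (μ {ω | |(∑ i, b i ω * ((Y η i : ℤ):ℝ)) - z₀| ≤ r}
        + (μ {ω | |(∑ i, b i ω * ((Y η i : ℤ):ℝ)) - (z₀ + 2*r)| ≤ r}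
        + μ {ω | |(∑ i, b i ω * ((Y η i : ℤ):ℝ)) - (z₀ + 4*r)| ≤ r}))) ≠ ⊤ :=
      ENNReal.add_ne_top.mpr ⟨measure_ne_top μ _, hne3⟩
    have hU : μ {ω | |(∑ i, b i ω * ((Y η i : ℤ):ℝ)) - z₀| ≤ 5*r}
        ≤ μ {ω | |(∑ i, b i ω * ((Y η i : ℤ):ℝ)) - (z₀ - 4*r)| ≤ r}
        + (μ {ω | |(∑ i, b i ω * ((Y η i : ℤ):ℝ)) - (z₀ - 2*r)| ≤ r}
        + (μ {ω | |(∑ i, b i ω * ((Y η i : ℤ):ℝ)) - z₀| ≤ r}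
        + (μ {ω | |(∑ i, b i ω * ((Y η i : ℤ):ℝ)) - (z₀ + 2*r)| ≤ r}
        + μ {ω | |(∑ i, b i ω * ((Y η i : ℤ):ℝ)) - (z₀ + 4*r)| ≤ r}))) := by
      refine le_trans (measure_mono hcov) ?_
      refine le_trans (measure_union_le _ _) ?_
      refine add_le_add_right ?_ _
      refine le_trans (measure_union_le _ _) ?_
      refine add_le_add_right ?_ _
      refine le_trans (measure_union_le _ _) ?_
      refine add_le_add_right ?_ _
      exact measure_union_le _ _
    have ha5 : (μ ({ω | |S ω - z₀| ≤ r} ∩ {ω | |Mr η ω| ≤ 4*r})).toReal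
        ≤ (μ {ω | |(∑ i, b i ω * ((Y η i : ℤ):ℝ)) - (z₀ - 4*r)| ≤ r}).toReal
        + ((μ {ω | |(∑ i, b i ω * ((Y η i : ℤ):ℝ)) - (z₀ - 2*r)| ≤ r}).toReal
        + ((μ {ω | |(∑ i, b i ω * ((Y η i : ℤ):ℝ)) - z₀| ≤ r}).toReal
        + ((μ {ω | |(∑ i, b i ω * ((Y η i : ℤ):ℝ)) - (z₀ + 2*r)| ≤ r}).toReal
        + (μ {ω | |(∑ i, b i ω * ((Y η i : ℤ):ℝ)) - (z₀ + 4*r)| ≤ r}).toReal))) := by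
      refine le_trans (ENNReal.toReal_mono (measure_ne_top μ _) (measure_mono hsub1)) ?_
      refine le_trans (ENNReal.toReal_mono hne4 hU) ?_
      rw [ENNReal.toReal_add (measure_ne_top μ _) hne3,
        ENNReal.toReal_add (measure_ne_top μ _) hne2,
        ENNReal.toReal_add (measure_ne_top μ _) hne1,
        ENNReal.toReal_add (measure_ne_top μ _) (measure_ne_top μ _)]
    have hfive : (μ {ω | |S ω - z₀| ≤ r}).toReal / 2
        ≤ (μ {ω | |(∑ i, b i ω * ((Y η i : ℤ):ℝ)) - (z₀ - 4*r)| ≤ r}).toReal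
        + ((μ {ω | |(∑ i, b i ω * ((Y η i : ℤ):ℝ)) - (z₀ - 2*r)| ≤ r}).toReal
        + ((μ {ω | |(∑ i, b i ω * ((Y η i : ℤ):ℝ)) - z₀| ≤ r}).toReal
        + ((μ {ω | |(∑ i, b i ω * ((Y η i : ℤ):ℝ)) - (z₀ + 2*r)| ≤ r}).toReal
        + (μ {ω | |(∑ i, b i ω * ((Y η i : ℤ):ℝ)) - (z₀ + 4*r)| ≤ r}).toReal))) := by
      refine le_trans ?_ ha5
      linarith
    have hex5 : ∃ zc : ℝ, (μ {ω | |S ω - z₀| ≤ r}).toReal / 10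
        ≤ (μ {ω | |(∑ i, b i ω * ((Y η i : ℤ):ℝ)) - zc| ≤ r}).toReal := by
      by_contra hcon
      push_neg at hcon
      have e1 := hcon (z₀ - 4*r)
      have e2 := hcon (z₀ - 2*r)
      have e3 := hcon z₀
      have e4 := hcon (z₀ + 2*r)
      have e5 := hcon (z₀ + 4*r)
      linarith
    obtain ⟨zc, hzc⟩ := hex5
    have hsup : (μ {ω | |S ω - z₀| ≤ r}).toReal / 10
        ≤ ⨆ z : ℝ, (μ {ω | |(∑ i, b i ω * ((Y η i : ℤ):ℝ)) - z| ≤ r}).toReal :=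
      le_trans hzc (le_ciSup hbdd zc)
    calc (1/20 : ℝ) * ⨆ z : ℝ, (μ {ω | |(∑ i, b i ω * y i) - z| ≤ r}).toReal
        ≤ (μ {ω | |S ω - z₀| ≤ r}).toReal / 10 := by linarith
    _ ≤ ⨆ z : ℝ, (μ {ω | |(∑ i, b i ω * ((Y η i : ℤ):ℝ)) - z| ≤ r}).toReal := hsup
  · -- degenerate branch : the sup is nonpositive
    obtain ⟨η, hWη, h3, h4⟩ := hsel 0
    refine ⟨Y η, hR1 η, hR2 η hWη, ?_, hR4 η h4⟩
    push_neg at hL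
    have hnn : 0 ≤ ⨆ z : ℝ, (μ {ω | |(∑ i, b i ω * ((Y η i : ℤ):ℝ)) - z| ≤ r}).toReal :=
      Real.iSup_nonneg fun z => ENNReal.toReal_nonneg
    calc (1/20 : ℝ) * ⨆ z : ℝ, (μ {ω | |(∑ i, b i ω * y i) - z| ≤ r}).toReal
        ≤ 0 := by nlinarith
    _ ≤ _ := hnn
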